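/- For a real quaternion h with h² = −1 and any real quaternion q with q·(i − h) = 0 in ℍ_ℂ, writing h = g 𝐢 g⁻¹ with g an invertible quaternion, one has 𝔻ℍ_ℂ·(i + 𝐢)·g⁻¹ = 𝔻ℍ_ℂ·g⁻¹·(i + h) = 𝔻ℍ_ℂ·(i + h); in particular the left annihilator ideal of (i − h) is independent of the choice of conjugating element g. -/

import Mathlib

/-- `a ∈ ℍ_ℂ` is (the complexification of) a real quaternion -/
def isRealQuat (a : Quaternion ℂ) : Prop :=
  a.re.im = 0 ∧ a.imI.im = 0 ∧ a.imJ.im = 0 ∧ a.imK.im = 0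

/-- embedding `ℍ_ℂ → 𝔻ℍ_ℂ` (primal part) -/
def inlDQ (a : Quaternion ℂ) : DualNumber (Quaternion ℂ) := (a, 0)

/-- the quaternion unit `𝐢` in `ℍ_ℂ` -/
def quatI : Quaternion ℂ := ⟨0, 1, 0, 0⟩

lemma inlDQ_mul (a b : Quaternion ℂ) : inlDQ (a * b) = inlDQ a * inlDQ b := by
  exact TrivSqZeroExt.inl_mul (R := Quaternion ℂ) (M := Quaternion ℂ) a b

lemma inlDQ_add (a b : Quaternion ℂ) : inlDQ (a + b) = inlDQ a + inlDQ b :=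
  TrivSqZeroExt.inl_add _ _ _

lemma inlDQ_one : inlDQ 1 = 1 := rfl

/-- Let `h` be a real quaternion with `h² = -1`, and `q` a real
quaternion with `q·(i - h) = 0` in `ℍ_ℂ`.  Writing `h = g·𝐢·g⁻¹` with `g` an invertible
real quaternion (inverse `gi`), one has the chain of left-ideal equalities in `𝔻ℍ_ℂ`
  `𝔻ℍ_ℂ·(i + 𝐢)·g⁻¹ = 𝔻ℍ_ℂ·g⁻¹·(i + h) = 𝔻ℍ_ℂ·(i + h)`,
and in particular the left annihilator of `(i - h)` equals `𝔻ℍ_ℂ·(i + h)`, independently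
of the choice of `g`. -/
theorem stmt_9
    (h q g gi : Quaternion ℂ)
    (hreal : isRealQuat h) (hh : h ^ 2 = -1)
    (hqreal : isRealQuat q) (hq : q * ((Complex.I : Quaternion ℂ) - h) = 0)
    (hgreal : isRealQuat g)
    (hgi : g * gi = 1) (hig : gi * g = 1)
    (hconj : h = g * quatI * gi) :
    ({x : DualNumber (Quaternion ℂ) |
        ∃ a, x = a * inlDQ (((Complex.I : Quaternion ℂ) + quatI) * gi)} =
      {x : DualNumber (Quaternion ℂ) |
        ∃ a, x = a * inlDQ (gi * ((Complex.I : Quaternion ℂ) + h))}) ∧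
    ({x : DualNumber (Quaternion ℂ) |
        ∃ a, x = a * inlDQ (gi * ((Complex.I : Quaternion ℂ) + h))} =
      {x : DualNumber (Quaternion ℂ) |
        ∃ a, x = a * inlDQ ((Complex.I : Quaternion ℂ) + h)}) ∧
    ({x : DualNumber (Quaternion ℂ) | x * inlDQ ((Complex.I : Quaternion ℂ) - h) = 0} =
      {x : DualNumber (Quaternion ℂ) |
        ∃ a, x = a * inlDQ ((Complex.I : Quaternion ℂ) + h)}) := by
  set i : Quaternion ℂ := (Complex.I : Quaternion ℂ) with hi
  -- key element equality: (i + 𝐢)·gi = gi·(i + h)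
  have key : (i + quatI) * gi = gi * (i + h) := by
    have hih : gi * h = quatI * gi := by
      rw [hconj, ← mul_assoc, ← mul_assoc, hig, one_mul]
    have hcomm : i * gi = gi * i := Quaternion.coe_commutes Complex.I gi
    rw [add_mul, mul_add, hcomm, hih]
  refine ⟨?_, ?_, ?_⟩
  · rw [key]
  · ext x
    simp only [Set.mem_setOf_eq]
    constructor
    · rintro ⟨a, rfl⟩
      exact ⟨a * inlDQ gi, by rw [inlDQ_mul, mul_assoc]⟩
    · rintro ⟨a, rfl⟩
      refine ⟨a * inlDQ g, ?_⟩
      rw [mul_assoc, ← inlDQ_mul, ← mul_assoc, hgi, one_mul]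
  · ext x
    simp only [Set.mem_setOf_eq]
    have hmul : (i + h) * (i - h) = 0 := by
      have hii : i * i = -1 := by
        rw [hi, ← Quaternion.coe_mul, Complex.I_mul_I]; simp
      have hih : i * h = h * i := Quaternion.coe_commutes Complex.I h
      have hhh : h * h = -1 := by rw [← sq]; exact hh
      rw [add_mul, mul_sub, mul_sub, hii, hih, hhh]
      abel
    constructor
    · intro hx
      -- use x·(2i) = x·(i+h) and invertibility of 2i
      set α : Quaternion ℂ := (((2 * Complex.I)⁻¹ : ℂ) : Quaternion ℂ) with hα
      refine ⟨x * inlDQ α, ?_⟩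
      have h2 : ((2 * Complex.I : ℂ) : Quaternion ℂ) = i + i := by
        push_cast [hi, two_mul]
        rfl
      have hsum : (i + h) + (i - h) = ((2 * Complex.I : ℂ) : Quaternion ℂ) := by
        rw [h2]; abel
      have hx2 : x * inlDQ ((2 * Complex.I : ℂ) : Quaternion ℂ) = x * inlDQ (i + h) := by
        rw [← hsum, inlDQ_add, mul_add, hx, add_zero]
      have hcen : α * (i + h) = (i + h) * α :=
        (Quaternion.coe_commutes _ _)
      have hinv : ((2 * Complex.I : ℂ) : Quaternion ℂ) * α = 1 := by
        rw [hα, ← Quaternion.coe_mul, mul_inv_cancel₀ (by simp [Complex.I_ne_zero]),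
          Quaternion.coe_one]
      calc x = x * inlDQ (((2 * Complex.I : ℂ) : Quaternion ℂ) * α) := by
              rw [hinv, inlDQ_one, mul_one]
        _ = x * inlDQ ((2 * Complex.I : ℂ) : Quaternion ℂ) * inlDQ α := by
              rw [inlDQ_mul, mul_assoc]
        _ = x * inlDQ (i + h) * inlDQ α := by rw [hx2]
        _ = x * inlDQ ((i + h) * α) := by rw [inlDQ_mul, mul_assoc]
        _ = x * inlDQ α * inlDQ (i + h) := by rw [← hcen, inlDQ_mul, mul_assoc]
    · rintro ⟨a, rfl⟩
      rw [mul_assoc, ← inlDQ_mul, hmul]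
      exact mul_zero a
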